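/- arXiv:0909.5432 — 2 statements merged into one kernel-verified Lean document; each statement's English description precedes it below -/
import Mathlib

section
/- Tensor product bound for the eigenfunction correlator: let H_J and H_K be self-adjoint operators on finite-dimensional Hilbert spaces and H = H_J ⊗ 1 + 1 ⊗ H_K. Then for product unit vectors δ_x = δ_{x_J} ⊗ δ_{x_K}, δ_y = δ_{y_J} ⊗ δ_{y_K} and any I ⊂ ℝ, Q_H(x,y;I) ≤ Q_{H_J}(x_J,y_J;ℝ) · Q_{H_K}(x_K,y_K;ℝ). -/
open Kronecker

noncomputable section

/-- Orthogonal projection onto the eigenspace of the matrix `A` with eigenvalue `E`,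
applied to `v`. -/
def eigProjM {n : Type*} [Fintype n] [DecidableEq n] (A : Matrix n n ℂ) (E : ℝ)
    (v : EuclideanSpace ℂ n) : EuclideanSpace ℂ n :=
  (Submodule.orthogonalProjectionOnto (Module.End.eigenspace (Matrix.toEuclideanLin A) (E : ℂ)) v :
    EuclideanSpace ℂ n)

/-- The eigenfunction correlator `Q_A(x,y;I) = ∑_{E ∈ σ(A) ∩ I} |⟨x, P_{E}(A) y⟩|`. -/
def QM {n : Type*} [Fintype n] [DecidableEq n] (A : Matrix n n ℂ)
    (x y : EuclideanSpace ℂ n) (I : Set ℝ) : ℝ :=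
  ∑' E : {E : ℝ // (E : ℂ) ∈ spectrum ℂ A ∧ E ∈ I}, ‖(inner ℂ x (eigProjM A E y) : ℂ)‖


open Finset Matrix

section herm
variable {n ι : Type*} [Fintype n] [DecidableEq n] [Fintype ι]
variable {A : Matrix n n ℂ}
variable {b : OrthonormalBasis ι ℂ (EuclideanSpace ℂ n)} {μ : ι → ℝ}

lemma eigProjM_basis (hA : A.IsHermitian)
    (hb : ∀ i, Matrix.toEuclideanLin A (b i) = ((μ i : ℝ) : ℂ) • b i) (E : ℝ) (i : ι) :
    eigProjM A E (b i) = if μ i = E then b i else 0 := by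
  by_cases h : μ i = E
  · simp only [h, if_pos rfl]
    exact Submodule.starProjection_eq_self_iff.mpr (Module.End.mem_eigenspace_iff.mpr (by rw [hb i, h]))
  · rw [if_neg h]
    have hmem : b i ∈ (Module.End.eigenspace (Matrix.toEuclideanLin A) ((E : ℝ) : ℂ))ᗮ := by
      rw [Submodule.mem_orthogonal]
      intro u hu
      have hfam := (Matrix.isHermitian_iff_isSymmetric.mp hA).orthogonalFamily_eigenspaces
      have hne : ((E : ℝ) : ℂ) ≠ ((μ i : ℝ) : ℂ) := by
        simp only [ne_eq, Complex.ofReal_inj]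
        exact fun hEq => h hEq.symm
      exact hfam hne ⟨u, hu⟩ ⟨b i, Module.End.mem_eigenspace_iff.mpr (hb i)⟩
    have := Submodule.orthogonalProjectionOnto_apply_of_mem_orthogonal hmem
    simpa [eigProjM] using congrArg Subtype.val this

lemma inner_eigProjM (hA : A.IsHermitian)
    (hb : ∀ i, Matrix.toEuclideanLin A (b i) = ((μ i : ℝ) : ℂ) • b i) (E : ℝ)
    (x y : EuclideanSpace ℂ n) :
    (inner ℂ x (eigProjM A E y) : ℂ) =
      ∑ i ∈ Finset.univ.filter (fun i => μ i = E),
        (inner ℂ x (b i) : ℂ) * (inner ℂ (b i) y : ℂ) := by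
  set K := Module.End.eigenspace (Matrix.toEuclideanLin A) ((E : ℝ) : ℂ)
  have hP : ∀ v, eigProjM A E v = (K.subtypeL.comp (Submodule.orthogonalProjectionOnto K)) v := fun _ => rfl
  have hy : eigProjM A E y = ∑ i, (inner ℂ (b i) y : ℂ) • eigProjM A E (b i) := by
    rw [hP]
    conv_lhs => rw [← b.sum_repr' y]
    rw [map_sum]
    refine Finset.sum_congr rfl fun i _ => ?_
    rw [_root_.map_smul, hP]
  rw [hy]
  rw [inner_sum]
  simp_rw [inner_smul_right, eigProjM_basis hA hb E]
  rw [Finset.sum_filter]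
  refine Finset.sum_congr rfl fun i _ => ?_
  by_cases h : μ i = E <;> simp [h, mul_comm]

lemma mem_spectrum_iff (hA : A.IsHermitian)
    (hb : ∀ i, Matrix.toEuclideanLin A (b i) = ((μ i : ℝ) : ℂ) • b i) (E : ℝ) :
    ((E : ℝ) : ℂ) ∈ spectrum ℂ A ↔ ∃ i, μ i = E := by
  rw [← Matrix.spectrum_toEuclideanLin (A := A),
    ← Module.End.hasEigenvalue_iff_mem_spectrum]
  constructor
  · intro h
    by_contra hc
    push_neg at hc
    obtain ⟨v, hv⟩ := h.exists_hasEigenvector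
    have hv0 : ∀ i, (inner ℂ (b i) v : ℂ) = 0 := by
      intro i
      have h1 : (inner ℂ (b i) (Matrix.toEuclideanLin A v) : ℂ) = (E : ℂ) * inner ℂ (b i) v := by
        rw [Module.End.mem_eigenspace_iff.mp hv.1, inner_smul_right]
      have h2 : (inner ℂ (b i) (Matrix.toEuclideanLin A v) : ℂ) = (μ i : ℂ) * inner ℂ (b i) v := by
        rw [← (Matrix.isHermitian_iff_isSymmetric.mp hA) (b i) v, hb i, inner_smul_left]
        simp
      have h3 : ((μ i : ℂ) - (E : ℂ)) * inner ℂ (b i) v = 0 := by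
        rw [sub_mul, ← h1, ← h2, sub_self]
      rcases mul_eq_zero.mp h3 with h4 | h4
      · exact absurd (Complex.ofReal_inj.mp (by linear_combination h4)) (hc i)
      · exact h4
    have : v = 0 := by
      rw [← b.sum_repr' v]
      simp [hv0]
    exact hv.2 this
  · rintro ⟨i, hi⟩
    exact Module.End.hasEigenvalue_of_hasEigenvector
      ⟨Module.End.mem_eigenspace_iff.mpr (by rw [hb i, hi]), b.orthonormal.ne_zero i⟩

lemma tsum_subtype_eq_sum {P : ℝ → Prop} {s : Finset ℝ} (h : ∀ E, P E ↔ E ∈ s)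
    (f : ℝ → ℝ) : ∑' E : {E : ℝ // P E}, f E = ∑ E ∈ s, f E := by
  rw [← Finset.tsum_subtype s f]
  exact ((Equiv.subtypeEquivRight fun E => (h E).trans Finset.mem_coe.symm).tsum_eq
    fun E : (↑s : Set ℝ) => f E)

lemma QM_eq_sum (hA : A.IsHermitian)
    (hb : ∀ i, Matrix.toEuclideanLin A (b i) = ((μ i : ℝ) : ℂ) • b i)
    (x y : EuclideanSpace ℂ n) (I : Set ℝ) [DecidablePred (· ∈ I)] :
    QM A x y I = ∑ E ∈ (Finset.image μ Finset.univ).filter (· ∈ I),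
      ‖(inner ℂ x (eigProjM A E y) : ℂ)‖ := by
  simp only [QM]
  refine tsum_subtype_eq_sum (f := fun E => ‖(inner ℂ x (eigProjM A E y) : ℂ)‖) fun E => ?_
  rw [Finset.mem_filter, Finset.mem_image, mem_spectrum_iff hA hb]
  simp

end herm

section prodvec
variable {m k : ℕ}

def pv (u : EuclideanSpace ℂ (Fin m)) (v : EuclideanSpace ℂ (Fin k)) :
    EuclideanSpace ℂ (Fin m × Fin k) :=
  WithLp.toLp 2 (fun p : Fin m × Fin k => u p.1 * v p.2)

@[simp] lemma pv_apply (u : EuclideanSpace ℂ (Fin m)) (v : EuclideanSpace ℂ (Fin k))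
    (p : Fin m × Fin k) : pv u v p = u p.1 * v p.2 := rfl

lemma inner_pv (u u' : EuclideanSpace ℂ (Fin m)) (v v' : EuclideanSpace ℂ (Fin k)) :
    (inner ℂ (pv u v) (pv u' v') : ℂ) = (inner ℂ u u' : ℂ) * (inner ℂ v v' : ℂ) := by
  simp only [PiLp.inner_apply, RCLike.inner_apply, pv_apply]
  rw [Fintype.sum_prod_type, Finset.sum_mul_sum]
  refine Finset.sum_congr rfl fun i _ => Finset.sum_congr rfl fun j _ => ?_
  simp [_root_.map_mul]
  ring

lemma single_pv (a : Fin m) (c : Fin k) :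
    (EuclideanSpace.single (a, c) (1:ℂ)) =
      pv (EuclideanSpace.single a 1) (EuclideanSpace.single c 1) := by
  ext ⟨i, j⟩
  simp [EuclideanSpace.single_apply, Prod.ext_iff, ite_and]
  by_cases h : i = a <;> by_cases h' : j = c <;> simp [h, h']

lemma toEuclideanLin_kron (A : Matrix (Fin m) (Fin m) ℂ) (B : Matrix (Fin k) (Fin k) ℂ)
    (u : EuclideanSpace ℂ (Fin m)) (v : EuclideanSpace ℂ (Fin k)) :
    Matrix.toEuclideanLin (A ⊗ₖ B) (pv u v) =
      pv (Matrix.toEuclideanLin A u) (Matrix.toEuclideanLin B v) := by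
  ext ⟨i, j⟩
  simp only [Matrix.toEuclideanLin_apply, pv_apply]
  show ((A ⊗ₖ B) *ᵥ _) (i, j) = (A *ᵥ u) i * (B *ᵥ v) j
  simp only [Matrix.mulVec, dotProduct, Matrix.kroneckerMap_apply]
  rw [Fintype.sum_prod_type, Finset.sum_mul_sum]
  refine Finset.sum_congr rfl fun p _ => Finset.sum_congr rfl fun q _ => ?_
  show A i p * B j q * (u p * v q) = _
  ring

lemma pv_orthonormal (bJ : OrthonormalBasis (Fin m) ℂ (EuclideanSpace ℂ (Fin m)))
    (bK : OrthonormalBasis (Fin k) ℂ (EuclideanSpace ℂ (Fin k))) :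
    Orthonormal ℂ (fun p : Fin m × Fin k => pv (bJ p.1) (bK p.2)) := by
  rw [orthonormal_iff_ite]
  intro p q
  rw [inner_pv, orthonormal_iff_ite.mp bJ.orthonormal, orthonormal_iff_ite.mp bK.orthonormal]
  by_cases h1 : p.1 = q.1 <;> by_cases h2 : p.2 = q.2 <;>
    simp [h1, h2, Prod.ext_iff]

def pvBasis (bJ : OrthonormalBasis (Fin m) ℂ (EuclideanSpace ℂ (Fin m)))
    (bK : OrthonormalBasis (Fin k) ℂ (EuclideanSpace ℂ (Fin k))) :
    OrthonormalBasis (Fin m × Fin k) ℂ (EuclideanSpace ℂ (Fin m × Fin k)) :=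
  OrthonormalBasis.mk (pv_orthonormal bJ bK)
    (ge_of_eq ((pv_orthonormal bJ bK).linearIndependent.span_eq_top_of_card_eq_finrank'
      (by simp [finrank_euclideanSpace])))

@[simp] lemma pvBasis_apply (bJ : OrthonormalBasis (Fin m) ℂ (EuclideanSpace ℂ (Fin m)))
    (bK : OrthonormalBasis (Fin k) ℂ (EuclideanSpace ℂ (Fin k))) (p : Fin m × Fin k) :
    pvBasis bJ bK p = pv (bJ p.1) (bK p.2) := by
  rw [pvBasis, OrthonormalBasis.coe_mk]

lemma kron_conjTranspose (A : Matrix (Fin m) (Fin m) ℂ) (B : Matrix (Fin k) (Fin k) ℂ) :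
    (A ⊗ₖ B)ᴴ = Aᴴ ⊗ₖ Bᴴ := by
  ext ⟨i, j⟩ ⟨p, q⟩
  simp [Matrix.conjTranspose_apply]

lemma kronSum_isHermitian {A : Matrix (Fin m) (Fin m) ℂ} {B : Matrix (Fin k) (Fin k) ℂ}
    (hA : A.IsHermitian) (hB : B.IsHermitian) :
    (A ⊗ₖ (1 : Matrix (Fin k) (Fin k) ℂ) + (1 : Matrix (Fin m) (Fin m) ℂ) ⊗ₖ B).IsHermitian := by
  have h1 : (1 : Matrix (Fin k) (Fin k) ℂ).IsHermitian := Matrix.isHermitian_one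
  have h2 : (1 : Matrix (Fin m) (Fin m) ℂ).IsHermitian := Matrix.isHermitian_one
  show _ = _
  rw [Matrix.conjTranspose_add, kron_conjTranspose, kron_conjTranspose, hA.eq, hB.eq, h1.eq, h2.eq]

lemma toEuclideanLin_one {N : Type*} [Fintype N] [DecidableEq N] (v : EuclideanSpace ℂ N) :
    Matrix.toEuclideanLin (1 : Matrix N N ℂ) v = v := by
  ext i
  simp [Matrix.toEuclideanLin_apply]

lemma kronSum_eigen {A : Matrix (Fin m) (Fin m) ℂ} {B : Matrix (Fin k) (Fin k) ℂ}
    {u : EuclideanSpace ℂ (Fin m)} {v : EuclideanSpace ℂ (Fin k)} {a c : ℝ}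
    (hu : Matrix.toEuclideanLin A u = ((a : ℝ) : ℂ) • u)
    (hv : Matrix.toEuclideanLin B v = ((c : ℝ) : ℂ) • v) :
    Matrix.toEuclideanLin
        (A ⊗ₖ (1 : Matrix (Fin k) (Fin k) ℂ) + (1 : Matrix (Fin m) (Fin m) ℂ) ⊗ₖ B) (pv u v)
      = (((a + c : ℝ)) : ℂ) • pv u v := by
  rw [map_add, LinearMap.add_apply, toEuclideanLin_kron, toEuclideanLin_kron, hu, hv]
  ext p
  simp only [pv_apply, toEuclideanLin_one, PiLp.add_apply, PiLp.smul_apply, smul_eq_mul]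
  push_cast
  ring

end prodvec

/-- Tensor product bound for the eigenfunction correlator: for
`H = H_J ⊗ 1 + 1 ⊗ H_K` and product basis vectors,
`Q_H(x,y;I) ≤ Q_{H_J}(x_J,y_J;ℝ) · Q_{H_K}(x_K,y_K;ℝ)`. -/
theorem efCorr_tensor_bound {m k : ℕ}
    (HJ : Matrix (Fin m) (Fin m) ℂ) (HK : Matrix (Fin k) (Fin k) ℂ)
    (hJ : HJ.IsHermitian) (hK : HK.IsHermitian) (I : Set ℝ)
    (xJ yJ : Fin m) (xK yK : Fin k) :
    QM (HJ ⊗ₖ (1 : Matrix (Fin k) (Fin k) ℂ) + (1 : Matrix (Fin m) (Fin m) ℂ) ⊗ₖ HK)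
        (EuclideanSpace.single (xJ, xK) 1) (EuclideanSpace.single (yJ, yK) 1) I
      ≤ QM HJ (EuclideanSpace.single xJ 1) (EuclideanSpace.single yJ 1) Set.univ *
        QM HK (EuclideanSpace.single xK 1) (EuclideanSpace.single yK 1) Set.univ := by
  classical
  set H := HJ ⊗ₖ (1 : Matrix (Fin k) (Fin k) ℂ) + (1 : Matrix (Fin m) (Fin m) ℂ) ⊗ₖ HK with hHdef
  have hH : H.IsHermitian := kronSum_isHermitian hJ hK
  set bJ := hJ.eigenvectorBasis with hbJdef
  set bK := hK.eigenvectorBasis with hbKdef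
  set μJ := hJ.eigenvalues with hμJdef
  set μK := hK.eigenvalues with hμKdef
  have hbJ : ∀ i, Matrix.toEuclideanLin HJ (bJ i) = ((μJ i : ℝ) : ℂ) • bJ i := by
    intro i
    ext a
    have h := congrFun (hJ.mulVec_eigenvectorBasis i) a
    simp only [Pi.smul_apply, smul_eq_mul] at h
    simp only [Matrix.toEuclideanLin_apply, PiLp.smul_apply, smul_eq_mul]
    rw [hbJdef, hμJdef]
    rw [h]
    simp [Complex.real_smul]
  have hbK : ∀ i, Matrix.toEuclideanLin HK (bK i) = ((μK i : ℝ) : ℂ) • bK i := by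
    intro i
    ext a
    have h := congrFun (hK.mulVec_eigenvectorBasis i) a
    simp only [Pi.smul_apply, smul_eq_mul] at h
    simp only [Matrix.toEuclideanLin_apply, PiLp.smul_apply, smul_eq_mul]
    rw [hbKdef, hμKdef]
    rw [h]
    simp [Complex.real_smul]
  set μH : Fin m × Fin k → ℝ := fun p => μJ p.1 + μK p.2 with hμHdef
  set bH := pvBasis bJ bK with hbHdef
  have hbH : ∀ p, Matrix.toEuclideanLin H (bH p) = ((μH p : ℝ) : ℂ) • bH p := by
    intro p
    rw [hbHdef, pvBasis_apply]
    exact kronSum_eigen (hbJ p.1) (hbK p.2)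
  rw [QM_eq_sum hH hbH, QM_eq_sum hJ hbJ, QM_eq_sum hK hbK]
  set SJ : Finset ℝ := Finset.image μJ Finset.univ with hSJ
  set SK : Finset ℝ := Finset.image μK Finset.univ with hSK
  set SH : Finset ℝ := Finset.image μH Finset.univ with hSH
  rw [Finset.filter_true_of_mem (fun _ _ => Set.mem_univ _),
    Finset.filter_true_of_mem (fun _ _ => Set.mem_univ _)]
  set c : Fin m → ℂ := fun i =>
    (inner ℂ (EuclideanSpace.single xJ (1:ℂ)) (bJ i) : ℂ) *
      (inner ℂ (bJ i) (EuclideanSpace.single yJ (1:ℂ)) : ℂ) with hc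
  set d : Fin k → ℂ := fun j =>
    (inner ℂ (EuclideanSpace.single xK (1:ℂ)) (bK j) : ℂ) *
      (inner ℂ (bK j) (EuclideanSpace.single yK (1:ℂ)) : ℂ) with hd
  have hterm : ∀ p : Fin m × Fin k,
      (inner ℂ (EuclideanSpace.single (xJ, xK) (1:ℂ)) (bH p) : ℂ) *
        (inner ℂ (bH p) (EuclideanSpace.single (yJ, yK) (1:ℂ)) : ℂ) = c p.1 * d p.2 := by
    intro p
    rw [hbHdef, pvBasis_apply, single_pv, single_pv, inner_pv, inner_pv, hc, hd]
    ring
  have hinnerH : ∀ E : ℝ, (inner ℂ (EuclideanSpace.single (xJ, xK) (1:ℂ))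
        (eigProjM H E (EuclideanSpace.single (yJ, yK) (1:ℂ))) : ℂ)
      = ∑ p ∈ Finset.univ.filter (fun p => μH p = E), c p.1 * d p.2 := by
    intro E
    rw [inner_eigProjM hH hbH]
    exact Finset.sum_congr rfl fun p _ => hterm p
  have hinnerJ : ∀ E : ℝ, (inner ℂ (EuclideanSpace.single xJ (1:ℂ))
        (eigProjM HJ E (EuclideanSpace.single yJ (1:ℂ))) : ℂ)
      = ∑ i ∈ Finset.univ.filter (fun i => μJ i = E), c i := fun E => inner_eigProjM hJ hbJ E _ _
  have hinnerK : ∀ E : ℝ, (inner ℂ (EuclideanSpace.single xK (1:ℂ))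
        (eigProjM HK E (EuclideanSpace.single yK (1:ℂ))) : ℂ)
      = ∑ j ∈ Finset.univ.filter (fun j => μK j = E), d j := fun E => inner_eigProjM hK hbK E _ _
  simp only [hinnerH, hinnerJ, hinnerK]
  set g : ℝ × ℝ → ℝ := fun q =>
    ‖∑ i ∈ Finset.univ.filter (fun i => μJ i = q.1), c i‖ *
      ‖∑ j ∈ Finset.univ.filter (fun j => μK j = q.2), d j‖ with hg
  calc ∑ E ∈ SH.filter (· ∈ I), ‖∑ p ∈ Finset.univ.filter (fun p => μH p = E), c p.1 * d p.2‖
      ≤ ∑ E ∈ SH, ‖∑ p ∈ Finset.univ.filter (fun p => μH p = E), c p.1 * d p.2‖ :=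
        Finset.sum_le_sum_of_subset_of_nonneg (Finset.filter_subset _ _)
          (fun _ _ _ => norm_nonneg _)
    _ ≤ ∑ E ∈ SH, ∑ q ∈ (SJ ×ˢ SK).filter (fun q => q.1 + q.2 = E), g q := by
        refine Finset.sum_le_sum fun E _ => ?_
        have hmaps : ∀ p ∈ Finset.univ.filter (fun p => μH p = E),
            (μJ p.1, μK p.2) ∈ (SJ ×ˢ SK).filter (fun q => q.1 + q.2 = E) := by
          intro p hp
          rw [Finset.mem_filter] at hp ⊢
          refine ⟨Finset.mem_product.mpr ⟨?_, ?_⟩, hp.2⟩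
          · exact Finset.mem_image_of_mem μJ (Finset.mem_univ _)
          · exact Finset.mem_image_of_mem μK (Finset.mem_univ _)
        rw [← Finset.sum_fiberwise_of_maps_to hmaps (fun p => c p.1 * d p.2)]
        refine le_trans (norm_sum_le _ _) (Finset.sum_le_sum fun q hq => ?_)
        rw [Finset.mem_filter] at hq
        have hfib : (Finset.univ.filter (fun p => μH p = E)).filter
              (fun p => (μJ p.1, μK p.2) = q)
            = (Finset.univ.filter (fun i => μJ i = q.1)) ×ˢ
                (Finset.univ.filter (fun j => μK j = q.2)) := by
          rw [Finset.filter_filter]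
          ext p
          simp only [Finset.mem_filter, Finset.mem_univ, true_and, Finset.mem_product,
            Prod.ext_iff]
          constructor
          · rintro ⟨-, h1, h2⟩; exact ⟨h1, h2⟩
          · rintro ⟨h1, h2⟩
            refine ⟨?_, h1, h2⟩
            rw [hμHdef]
            dsimp only
            rw [h1, h2, hq.2]
        rw [hfib, Finset.sum_product, ← Finset.sum_mul_sum]
        rw [hg, norm_mul]
    _ = ∑ q ∈ SJ ×ˢ SK, g q := by
        refine Finset.sum_fiberwise_of_maps_to (fun q hq => ?_) g
        rw [Finset.mem_product] at hq
        obtain ⟨i, -, hi⟩ := Finset.mem_image.mp hq.1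
        obtain ⟨j, -, hj⟩ := Finset.mem_image.mp hq.2
        rw [hSH]
        refine Finset.mem_image.mpr ⟨(i, j), Finset.mem_univ _, ?_⟩
        rw [hμHdef]
        dsimp only
        rw [hi, hj]
    _ = _ := by
        rw [Finset.sum_product, Finset.sum_mul_sum]

end
end

section
/- If a sequence a : ℕ → ℝ_{≥0} satisfies a(2L) ≤ a(L)^2 + ε(L) where ε(L) ≤ δ·e^{-2νL} for all L, and a(L_0) ≤ e^{-νL_0} for some L_0 with (1+δ) e^{-νL_0} ≤ 1, then a(2^k L_0) ≤ ((1+δ) e^{-ν L_0})^{2^k} / (1+δ) for all k ≥ 0; in particular a(2^k L_0) → 0 faster than any exponential in k. -/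
/-- Abstract rescaling bound: if `a(2L) ≤ a(L)² + ε(L)` with `ε(L) ≤ δ e^{-2νL}`, and
`a(L₀) ≤ e^{-νL₀}` at a scale `L₀` with `(1+δ) e^{-νL₀} ≤ 1`, then
`a(2^k L₀) ≤ ((1+δ) e^{-νL₀})^{2^k} / (1+δ)` for all `k`; in particular `a(2^k L₀)`
tends to `0` faster than any exponential in `k`. -/
theorem rescaling_doubly_exponential_decay
    (a : ℕ → ℝ) (ha : ∀ L, 0 ≤ a L) (ε : ℕ → ℝ) (δ ν : ℝ) (hδ : 0 ≤ δ) (hν : 0 < ν)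
    (hrec : ∀ L : ℕ, a (2 * L) ≤ (a L) ^ 2 + ε L)
    (hε : ∀ L : ℕ, ε L ≤ δ * Real.exp (-2 * ν * L))
    (L₀ : ℕ) (h0 : a L₀ ≤ Real.exp (-ν * L₀))
    (h1 : (1 + δ) * Real.exp (-ν * L₀) ≤ 1) :
    ∀ k : ℕ, a (2 ^ k * L₀) ≤ ((1 + δ) * Real.exp (-ν * L₀)) ^ (2 ^ k) / (1 + δ) := by
  set E := Real.exp (-ν * L₀) with hE
  have hEpos : 0 < E := Real.exp_pos _
  have hδ1 : (0:ℝ) < 1 + δ := by linarith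
  intro k
  induction k with
  | zero =>
      simpa [mul_div_assoc, mul_div_cancel_left₀ _ (ne_of_gt hδ1)] using h0
  | succ k ih =>
      set F := E ^ (2 ^ k) with hF
      set Y := ((1 + δ) * E) ^ (2 ^ k) with hY
      have hFpos : 0 < F := pow_pos hEpos _
      have hYF : (1 + δ) * F ≤ Y := by
        have h1le : 1 + δ ≤ (1 + δ) ^ (2 ^ k) :=
          le_self_pow₀ (by linarith) (pow_ne_zero k two_ne_zero)
        calc (1 + δ) * F ≤ (1 + δ) ^ (2 ^ k) * F := by
              exact mul_le_mul_of_nonneg_right h1le (le_of_lt hFpos)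
          _ = Y := by rw [hY, mul_pow]
      have hstep : a (2 ^ (k + 1) * L₀) ≤ a (2 ^ k * L₀) ^ 2 + ε (2 ^ k * L₀) := by
        have harg : 2 ^ (k + 1) * L₀ = 2 * (2 ^ k * L₀) := by ring
        rw [harg]
        exact hrec _
      have hεb : ε (2 ^ k * L₀) ≤ δ * F ^ 2 := by
        have h := hε (2 ^ k * L₀)
        have hexp : Real.exp (-2 * ν * ((2 ^ k * L₀ : ℕ) : ℝ)) = F ^ 2 := by
          rw [hF, hE, ← Real.exp_nat_mul, ← Real.exp_nat_mul]
          congr 1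
          push_cast
          ring
        rwa [hexp] at h
      have hgoal : a (2 ^ (k + 1) * L₀) ≤ Y ^ 2 / (1 + δ) := by
        have ha' := ha (2 ^ k * L₀)
        have hFY : F ≤ Y / (1 + δ) := by
          rw [le_div_iff₀ hδ1]; linarith [hYF]
        have hsq : a (2 ^ k * L₀) ^ 2 ≤ (Y / (1 + δ)) ^ 2 :=
          pow_le_pow_left₀ ha' ih 2
        have hFsq : F ^ 2 ≤ (Y / (1 + δ)) ^ 2 := pow_le_pow_left₀ (le_of_lt hFpos) hFY 2
        have : a (2 ^ (k + 1) * L₀) ≤ (Y / (1 + δ)) ^ 2 + δ * (Y / (1 + δ)) ^ 2 := by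
          have := hstep
          nlinarith [mul_le_mul_of_nonneg_left hFsq hδ]
        calc a (2 ^ (k + 1) * L₀) ≤ (Y / (1 + δ)) ^ 2 + δ * (Y / (1 + δ)) ^ 2 := this
          _ = Y ^ 2 / (1 + δ) := by field_simp
      calc a (2 ^ (k + 1) * L₀) ≤ Y ^ 2 / (1 + δ) := hgoal
        _ = ((1 + δ) * E) ^ (2 ^ (k + 1)) / (1 + δ) := by
            rw [hY, ← pow_mul, pow_succ]
end
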